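/- We have $\sum_{n=1}^{\infty} \frac{\mu(n)}{n \cdot \operatorname{lcm}(5,n)^2} = \frac{1}{\zeta(3)} \cdot \frac{5-1}{5^3-1}$. -/

import Mathlib

open ArithmeticFunction
open scoped ArithmeticFunction.Moebius
open scoped LSeries.notation

section stmt2aux

noncomputable def Fc : ℕ → ℂ := fun n => (μ n : ℂ) / ((n : ℂ) * (Nat.lcm 5 n : ℂ) ^ 2)
noncomputable def Gc : ℕ → ℂ := fun n => if 5 ∣ n then 0 else (μ n : ℂ) / (n : ℂ) ^ 3
noncomputable def Hc : ℕ → ℂ := fun n => (μ n : ℂ) / (n : ℂ) ^ 3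
noncomputable def F1 : ℕ → ℂ := fun n => if 5 ∣ n then 0 else Fc n
noncomputable def F2 : ℕ → ℂ := fun n => if 5 ∣ n then Fc n else 0
noncomputable def H2 : ℕ → ℂ := fun n => if 5 ∣ n then Hc n else 0

lemma norm_moebius_le (n : ℕ) : ‖((μ n : ℤ) : ℂ)‖ ≤ 1 := by
  rw [Complex.norm_intCast]
  exact_mod_cast abs_moebius_le_one

lemma summable_of_cube_bound (f : ℕ → ℂ) (h : ∀ n, ‖f n‖ ≤ 1 / (n : ℝ) ^ 3) :
    Summable f :=
  Summable.of_norm_bounded (Real.summable_one_div_nat_pow.mpr (by norm_num)) h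

lemma hc_bound (n : ℕ) : ‖Hc n‖ ≤ 1 / (n : ℝ) ^ 3 := by
  rcases eq_or_ne n 0 with rfl | hn
  · simp [Hc]
  · have h1 : (0:ℝ) < (n:ℝ) ^ 3 := by positivity
    rw [Hc, norm_div, norm_pow, Complex.norm_natCast]
    exact div_le_div₀ zero_le_one (norm_moebius_le n) h1 le_rfl

lemma fc_bound (n : ℕ) : ‖Fc n‖ ≤ 1 / (n : ℝ) ^ 3 := by
  rcases eq_or_ne n 0 with rfl | hn
  · simp [Fc]
  · have hle : n ≤ Nat.lcm 5 n :=
      Nat.le_of_dvd (Nat.pos_of_ne_zero (Nat.lcm_ne_zero (by norm_num) hn))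
        (Nat.dvd_lcm_right 5 n)
    have h1 : (0:ℝ) < (n:ℝ) ^ 3 := by positivity
    have h2 : ((n:ℝ) ^ 3) ≤ (n:ℝ) * (Nat.lcm 5 n : ℝ) ^ 2 := by
      have hc : (n:ℝ) ≤ (Nat.lcm 5 n : ℝ) := by exact_mod_cast hle
      have hn0 : (0:ℝ) ≤ (n:ℝ) := by positivity
      calc (n:ℝ) ^ 3 = (n:ℝ) * (n:ℝ) ^ 2 := by ring
        _ ≤ (n:ℝ) * (Nat.lcm 5 n : ℝ) ^ 2 := by
            apply mul_le_mul_of_nonneg_left _ hn0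
            exact pow_le_pow_left₀ hn0 hc 2
    rw [Fc, norm_div, norm_mul, norm_pow, Complex.norm_natCast, Complex.norm_natCast]
    exact div_le_div₀ zero_le_one (norm_moebius_le n) h1 h2

lemma gc_bound (n : ℕ) : ‖Gc n‖ ≤ 1 / (n : ℝ) ^ 3 := by
  rw [Gc]
  split
  · simp
  · exact hc_bound n

lemma f1_bound (n : ℕ) : ‖F1 n‖ ≤ 1 / (n : ℝ) ^ 3 := by
  rw [F1]; split
  · simp
  · exact fc_bound n

lemma f2_bound (n : ℕ) : ‖F2 n‖ ≤ 1 / (n : ℝ) ^ 3 := by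
  rw [F2]; split
  · exact fc_bound n
  · simp

lemma h2_bound (n : ℕ) : ‖H2 n‖ ≤ 1 / (n : ℝ) ^ 3 := by
  rw [H2]; split
  · exact hc_bound n
  · simp

lemma lcm_eq_of_not_dvd {n : ℕ} (h : ¬ 5 ∣ n) : Nat.lcm 5 n = 5 * n :=
  Nat.Coprime.lcm_eq_mul ((Nat.Prime.coprime_iff_not_dvd (by norm_num)).mpr h)

lemma lcm_five_mul (m : ℕ) : Nat.lcm 5 (5 * m) = 5 * m :=
  Nat.dvd_antisymm (Nat.lcm_dvd (Dvd.intro m rfl) dvd_rfl) (Nat.dvd_lcm_right _ _)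

lemma moebius_five_mul {m : ℕ} (h : ¬ 5 ∣ m) : μ (5 * m) = - μ m := by
  have cop : Nat.Coprime 5 m := (Nat.Prime.coprime_iff_not_dvd (by norm_num)).mpr h
  rw [isMultiplicative_moebius.map_mul_of_coprime cop,
    moebius_apply_prime (by norm_num)]
  ring

lemma moebius_five_mul_eq_zero {m : ℕ} (h : 5 ∣ m) : μ (5 * m) = 0 := by
  apply moebius_eq_zero_of_not_squarefree
  obtain ⟨k, rfl⟩ := h
  intro hs
  have : (5 : ℕ) * 5 ∣ 5 * (5 * k) := ⟨k, by ring⟩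
  exact absurd (hs 5 this) (by norm_num)

lemma F2_eq (m : ℕ) : F2 (5 * m) = -(1/125) * Gc m := by
  by_cases h : 5 ∣ m
  · simp [F2, Fc, Gc, h, moebius_five_mul_eq_zero h, Dvd.intro m rfl]
  · have hm : m ≠ 0 := fun hm => h (hm ▸ dvd_zero 5)
    have hm' : (m : ℂ) ≠ 0 := Nat.cast_ne_zero.mpr hm
    rw [F2, if_pos (Dvd.intro m rfl), Fc]
    simp only [Gc, if_neg h, lcm_five_mul, moebius_five_mul h]
    push_cast
    field_simp
    ring

lemma H2_eq (m : ℕ) : H2 (5 * m) = -(1/125) * Gc m := by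
  by_cases h : 5 ∣ m
  · simp [H2, Hc, Gc, h, moebius_five_mul_eq_zero h, Dvd.intro m rfl]
  · have hm : m ≠ 0 := fun hm => h (hm ▸ dvd_zero 5)
    have hm' : (m : ℂ) ≠ 0 := Nat.cast_ne_zero.mpr hm
    rw [H2, if_pos (Dvd.intro m rfl), Hc]
    simp only [Gc, if_neg h, moebius_five_mul h]
    push_cast
    field_simp
    ring

lemma F1_eq (n : ℕ) : F1 n = (1/25) * Gc n := by
  by_cases h : 5 ∣ n
  · simp [F1, Gc, h]
  · have hn : n ≠ 0 := fun hn => h (hn ▸ dvd_zero 5)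
    have hn' : (n : ℂ) ≠ 0 := Nat.cast_ne_zero.mpr hn
    rw [F1, if_neg h, Fc, lcm_eq_of_not_dvd h]
    simp only [Gc, if_neg h]
    push_cast
    field_simp
    ring

lemma five_mul_injective : Function.Injective (fun m : ℕ => 5 * m) :=
  mul_right_injective₀ (by norm_num)

lemma tsum_mult_part (f : ℕ → ℂ) (hf : ∀ n, ¬ 5 ∣ n → f n = 0) :
    ∑' m : ℕ, f (5 * m) = ∑' n, f n := by
  apply Function.Injective.tsum_eq five_mul_injective
  intro x hx
  by_contra hr
  exact hx (hf x (fun ⟨m, hm⟩ => hr ⟨m, hm.symm⟩))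

end stmt2aux

/-- `∑ μ(n)/(n · lcm(5,n)²) = (1/ζ(3)) · (5-1)/(5³-1)`. -/
theorem stmt_2 :
    ∑' n : ℕ, (μ n : ℂ) / ((n : ℂ) * (Nat.lcm 5 n : ℂ) ^ 2) =
      (1 / riemannZeta 3) * (((5 : ℂ) - 1) / ((5 : ℂ) ^ 3 - 1)) := by
  have h3 : (1:ℝ) < (3:ℂ).re := by norm_num
  -- summabilities
  have sF1 : Summable F1 := summable_of_cube_bound _ f1_bound
  have sF2 : Summable F2 := summable_of_cube_bound _ f2_bound
  have sG : Summable Gc := summable_of_cube_bound _ gc_bound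
  have sH2 : Summable H2 := summable_of_cube_bound _ h2_bound
  set S : ℂ := ∑' n, Gc n with hS
  set M : ℂ := ∑' n, Hc n with hM
  -- M = 1 / ζ(3)
  have hHterm : Hc = fun n => LSeries.term (↗μ) 3 n := by
    funext n
    rcases eq_or_ne n 0 with rfl | hn
    · simp [Hc]
    · rw [LSeries.term_of_ne_zero hn, Hc,
        show (3:ℂ) = ((3:ℕ):ℂ) by norm_num, Complex.cpow_natCast]
  have hML : M = LSeries (↗μ) 3 := by
    rw [hM, hHterm, LSeries]
  have hzeta : riemannZeta 3 * M = 1 := by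
    rw [hML, ← LSeries_zeta_eq_riemannZeta h3]
    exact LSeries_zeta_mul_Lseries_moebius h3
  have hz0 : riemannZeta 3 ≠ 0 := riemannZeta_ne_zero_of_one_lt_re h3
  have hMval : M = 1 / riemannZeta 3 := by
    field_simp
    linear_combination hzeta
  -- tsum F2 = -(1/125) S
  have hF2 : ∑' n, F2 n = -(1/125) * S := by
    rw [← tsum_mult_part F2 (fun n hn => if_neg hn)]
    calc ∑' m : ℕ, F2 (5 * m) = ∑' m : ℕ, -(1/125) * Gc m := by
          exact tsum_congr F2_eq
      _ = -(1/125) * S := tsum_mul_left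
  -- tsum H2 = -(1/125) S
  have hH2 : ∑' n, H2 n = -(1/125) * S := by
    rw [← tsum_mult_part H2 (fun n hn => if_neg hn)]
    calc ∑' m : ℕ, H2 (5 * m) = ∑' m : ℕ, -(1/125) * Gc m := by
          exact tsum_congr H2_eq
      _ = -(1/125) * S := tsum_mul_left
  -- tsum F1 = (1/25) S
  have hF1 : ∑' n, F1 n = (1/25) * S := by
    calc ∑' n, F1 n = ∑' n, (1/25) * Gc n := tsum_congr F1_eq
      _ = (1/25) * S := tsum_mul_left
  -- split M
  have hMsplit : M = S + -(1/125) * S := by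
    rw [hM, ← hH2]
    rw [← Summable.tsum_add sG sH2]
    apply tsum_congr
    intro n
    rw [Hc, Gc, H2, Hc]
    split
    · simp
    · simp
  -- split F
  have hFsplit : (∑' n : ℕ, (μ n : ℂ) / ((n : ℂ) * (Nat.lcm 5 n : ℂ) ^ 2))
      = (1/25) * S + -(1/125) * S := by
    rw [← hF1, ← hF2, ← Summable.tsum_add sF1 sF2]
    apply tsum_congr
    intro n
    rw [F1, F2]
    split
    · simp [Fc]
    · simp [Fc]
  rw [hFsplit, ← hMval]
  have h124 : ((5:ℂ)^3 - 1) = 124 := by norm_num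
  rw [h124]
  linear_combination (-(4/124) : ℂ) * hMsplit
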